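/- arXiv:0911.3675 — 2 statements merged into one kernel-verified Lean document; each statement's English description precedes it below -/
import Mathlib

section
/- Let G = (X, E) be a finite simple graph that is 2-connected and has more than three vertices. Then for every edge e of G, at least one of the graphs G/e (the contraction of e) or G − e (the deletion of e) is 2-connected. -/
/-- A finite simple graph `G` is 2-connected if it has more than two vertices,
is connected, and removing any single vertex (with all incident edges) leaves
a connected graph. -/
def TwoConnected {V : Type*} [Fintype V] (G : SimpleGraph V) : Prop :=
  2 < Fintype.card V ∧ G.Connected ∧
    ∀ v : V, (SimpleGraph.induce ({v}ᶜ : Set V) G).Connected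

/-- Contraction of the edge `{x, y}` of a simple graph `G`: the vertex `y` is
identified with the vertex `x` (so the vertex set is `{v // v ≠ y}`); parallel
edges are merged and loops are deleted. -/
def SimpleGraph.contractEdge {X : Type*} (G : SimpleGraph X) (x y : X) :
    SimpleGraph {v : X // v ≠ y} where
  Adj a b := a ≠ b ∧
    (G.Adj a.1 b.1 ∨ (a.1 = x ∧ G.Adj y b.1) ∨ (b.1 = x ∧ G.Adj y a.1))
  symm := by
    constructor
    rintro a b ⟨hab, h⟩
    refine ⟨hab.symm, ?_⟩
    rcases h with h | ⟨h1, h2⟩ | ⟨h1, h2⟩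
    · exact Or.inl h.symm
    · exact Or.inr (Or.inr ⟨h1, h2⟩)
    · exact Or.inr (Or.inl ⟨h1, h2⟩)
  loopless := by constructor; rintro a ⟨h, -⟩; exact h rfl

namespace TwoConnAux

open SimpleGraph

variable {V W : Type*}

lemma reach_transfer {G : SimpleGraph V} {H : SimpleGraph W} (f : V → W)
    (hf : ∀ a b, G.Adj a b → H.Reachable (f a) (f b)) :
    ∀ {u v : V}, G.Reachable u v → H.Reachable (f u) (f v) := by
  intro u v h
  obtain ⟨p⟩ := h
  induction p with
  | nil => exact Reachable.refl _
  | cons h p ih => exact (hf _ _ h).trans ih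

lemma connected_transfer {G : SimpleGraph V} {H : SimpleGraph W} (f : V → W)
    (hf : ∀ a b, G.Adj a b → H.Reachable (f a) (f b))
    (hsurj : Function.Surjective f) (hG : G.Connected) : H.Connected := by
  have hne : Nonempty W := by
    obtain ⟨v⟩ := hG.nonempty
    exact ⟨f v⟩
  rw [SimpleGraph.connected_iff]
  refine ⟨fun u v => ?_, hne⟩
  obtain ⟨a, rfl⟩ := hsurj u
  obtain ⟨b, rfl⟩ := hsurj v
  exact reach_transfer f hf (hG.preconnected a b)

/-- If the graph with `y` removed is connected, then from any vertex `c` of `s`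
one can reach (inside `s`) a neighbor of `x`. -/
lemma exists_nbr (G : SimpleGraph V) (x y : V) (hne : x ≠ y) (s : Set V)
    (hsx : x ∉ s) (hsub : ∀ v : V, v ≠ x → v ≠ y → v ∈ s)
    (hconn : (SimpleGraph.induce ({y}ᶜ : Set V) G).Connected)
    (c : s) (hcy : c.1 ≠ y) :
    ∃ v : s, (SimpleGraph.induce s G).Reachable c v ∧ G.Adj x v.1 := by
  have hcx : c.1 ≠ x := fun h => hsx (h ▸ c.2)
  have hx : x ∈ ({y}ᶜ : Set V) := by simpa using hne
  have main : ∀ (u v : ↑({y}ᶜ : Set V))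
      (_ : (SimpleGraph.induce ({y}ᶜ : Set V) G).Walk u v),
      v.1 = x → ∀ (hux : u.1 ≠ x) (hu : u.1 ∈ s),
      (SimpleGraph.induce s G).Reachable c ⟨u.1, hu⟩ →
      ∃ v : s, (SimpleGraph.induce s G).Reachable c v ∧ G.Adj x v.1 := by
    intro u v p
    induction p with
    | nil => intro hvx hux _ _; exact absurd hvx hux
    | @cons u u₂ v h q ih =>
      intro hvx hux hu hreach
      have hG : G.Adj u.1 u₂.1 := h
      by_cases h2x : u₂.1 = x
      · exact ⟨⟨u.1, hu⟩, hreach, by rw [← h2x]; exact hG.symm⟩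
      · have h2y : u₂.1 ≠ y := by
          have h2 := u₂.2
          rwa [Set.mem_compl_iff, Set.mem_singleton_iff] at h2
        have hu2 : u₂.1 ∈ s := hsub _ h2x h2y
        have hadj : (SimpleGraph.induce s G).Adj ⟨u.1, hu⟩ ⟨u₂.1, hu2⟩ := hG
        exact ih hvx h2x hu2 (hreach.trans hadj.reachable)
  obtain ⟨p⟩ := hconn.preconnected ⟨c.1, by simpa using hcy⟩ ⟨x, hx⟩
  exact main _ _ p rfl hcx c.2 (Reachable.refl _)

lemma walk_in_B [DecidableEq V] (G : SimpleGraph V) (x y w : V)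
    (hw : w ∈ ({x, y}ᶜ : Set V)) :
    ∀ (u v : ↑({x, y}ᶜ : Set V))
      (_ : (SimpleGraph.induce ({x, y}ᶜ : Set V) G).Walk u v),
      ¬ (SimpleGraph.induce ({x, y}ᶜ : Set V) G).Reachable ⟨w, hw⟩ u →
      ∀ (hu : u.1 ∈ ({w}ᶜ : Set V)) (hv : v.1 ∈ ({w}ᶜ : Set V)),
      (SimpleGraph.induce ({w}ᶜ : Set V) (G.deleteEdges {s(x, y)})).Reachable
        ⟨u.1, hu⟩ ⟨v.1, hv⟩ := by
  intro u v p
  induction p with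
  | nil => intro _ hu hv; exact Reachable.refl _
  | @cons u u₂ v h q ih =>
    intro hnr hu hv
    have hG : G.Adj u.1 u₂.1 := h
    have hnr2 : ¬ (SimpleGraph.induce ({x, y}ᶜ : Set V) G).Reachable ⟨w, hw⟩ u₂ :=
      fun hr => hnr (hr.trans h.symm.reachable)
    have hu2w : u₂.1 ∈ ({w}ᶜ : Set V) := by
      simp only [Set.mem_compl_iff, Set.mem_singleton_iff]
      intro hq
      exact hnr2 (by rw [show u₂ = ⟨w, hw⟩ from Subtype.ext hq])
    have hu' : ¬(u.1 = x ∨ u.1 = y) := by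
      have h2 := u.2
      rwa [Set.mem_compl_iff, Set.mem_insert_iff, Set.mem_singleton_iff] at h2
    have hux : u.1 ≠ x := fun h => hu' (Or.inl h)
    have huy : u.1 ≠ y := fun h => hu' (Or.inr h)
    have hadj : (SimpleGraph.induce ({w}ᶜ : Set V) (G.deleteEdges {s(x, y)})).Adj
        ⟨u.1, hu⟩ ⟨u₂.1, hu2w⟩ := by
      rw [show ((SimpleGraph.induce ({w}ᶜ : Set V) (G.deleteEdges {s(x, y)})).Adj
          ⟨u.1, hu⟩ ⟨u₂.1, hu2w⟩) ↔ _ from SimpleGraph.deleteEdges_adj]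
      refine ⟨hG, ?_⟩
      simp only [Set.mem_singleton_iff, Sym2.eq_iff]
      push_neg
      exact ⟨fun h => absurd h hux, fun h => absurd h huy⟩
    exact hadj.reachable.trans (ih hnr2 hu2w hv)

lemma key_reach [DecidableEq V] (G : SimpleGraph V)
    (hdel : ∀ v : V, (SimpleGraph.induce ({v}ᶜ : Set V) G).Connected)
    (x y : V) (hne : x ≠ y)
    (hK : ¬ (SimpleGraph.induce ({x, y}ᶜ : Set V) G).Connected)
    (w : V) (hwx : w ≠ x) (hwy : w ≠ y)
    (hxw : x ∈ ({w}ᶜ : Set V)) (hyw : y ∈ ({w}ᶜ : Set V)) :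
    (SimpleGraph.induce ({w}ᶜ : Set V) (G.deleteEdges {s(x, y)})).Reachable
      ⟨x, hxw⟩ ⟨y, hyw⟩ := by
  have hwmem : w ∈ ({x, y}ᶜ : Set V) := by
    rw [Set.mem_compl_iff, Set.mem_insert_iff, Set.mem_singleton_iff]
    push_neg; exact ⟨hwx, hwy⟩
  have hKne : Nonempty ↑({x, y}ᶜ : Set V) := ⟨⟨w, hwmem⟩⟩
  have hnp : ¬ (SimpleGraph.induce ({x, y}ᶜ : Set V) G).Preconnected := by
    intro h; exact hK ((SimpleGraph.connected_iff _).mpr ⟨h, hKne⟩)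
  rw [SimpleGraph.Preconnected] at hnp; push_neg at hnp
  obtain ⟨a, b, hab⟩ := hnp
  obtain ⟨c, hc⟩ : ∃ c, ¬ (SimpleGraph.induce ({x, y}ᶜ : Set V) G).Reachable ⟨w, hwmem⟩ c := by
    by_cases h : (SimpleGraph.induce ({x, y}ᶜ : Set V) G).Reachable ⟨w, hwmem⟩ a
    · exact ⟨b, fun h2 => hab (h.symm.trans h2)⟩
    · exact ⟨a, h⟩
  have hcmem : ¬(c.1 = x ∨ c.1 = y) := by
    have h2 := c.2
    rwa [Set.mem_compl_iff, Set.mem_insert_iff, Set.mem_singleton_iff] at h2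
  have hsx : x ∉ ({x, y}ᶜ : Set V) := by simp
  have hsy : y ∉ ({x, y}ᶜ : Set V) := by simp
  obtain ⟨v₁, hv₁r, hv₁adj⟩ := exists_nbr G x y hne _ hsx
    (fun v hvx hvy => by
      rw [Set.mem_compl_iff, Set.mem_insert_iff, Set.mem_singleton_iff]; push_neg
      exact ⟨hvx, hvy⟩)
    (hdel y) c (fun h => hcmem (Or.inr h))
  obtain ⟨v₂, hv₂r, hv₂adj⟩ := exists_nbr G y x hne.symm ({x, y}ᶜ : Set V) hsy
    (fun v hvy hvx => by
      rw [Set.mem_compl_iff, Set.mem_insert_iff, Set.mem_singleton_iff]; push_neg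
      exact ⟨hvx, hvy⟩)
    (hdel x) c (fun h => hcmem (Or.inl h))
  have hv₁nr : ¬ (SimpleGraph.induce ({x, y}ᶜ : Set V) G).Reachable ⟨w, hwmem⟩ v₁ :=
    fun h => hc (h.trans hv₁r.symm)
  have hv₂nr : ¬ (SimpleGraph.induce ({x, y}ᶜ : Set V) G).Reachable ⟨w, hwmem⟩ v₂ :=
    fun h => hc (h.trans hv₂r.symm)
  have hv₁w : v₁.1 ∈ ({w}ᶜ : Set V) := by
    rw [Set.mem_compl_iff, Set.mem_singleton_iff]
    intro h; exact hv₁nr (by rw [show v₁ = ⟨w, hwmem⟩ from Subtype.ext h])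
  have hv₂w : v₂.1 ∈ ({w}ᶜ : Set V) := by
    rw [Set.mem_compl_iff, Set.mem_singleton_iff]
    intro h; exact hv₂nr (by rw [show v₂ = ⟨w, hwmem⟩ from Subtype.ext h])
  obtain ⟨p⟩ := hv₁r.symm.trans hv₂r
  have h12 := walk_in_B G x y w hwmem v₁ v₂ p hv₁nr hv₁w hv₂w
  have hv₁mem : ¬(v₁.1 = x ∨ v₁.1 = y) := by
    have h2 := v₁.2
    rwa [Set.mem_compl_iff, Set.mem_insert_iff, Set.mem_singleton_iff] at h2
  have hv₂mem : ¬(v₂.1 = x ∨ v₂.1 = y) := by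
    have h2 := v₂.2
    rwa [Set.mem_compl_iff, Set.mem_insert_iff, Set.mem_singleton_iff] at h2
  have hadj1 : (SimpleGraph.induce ({w}ᶜ : Set V) (G.deleteEdges {s(x, y)})).Adj
      ⟨x, hxw⟩ ⟨v₁.1, hv₁w⟩ := by
    rw [show ((SimpleGraph.induce ({w}ᶜ : Set V) (G.deleteEdges {s(x, y)})).Adj
        ⟨x, hxw⟩ ⟨v₁.1, hv₁w⟩) ↔ _ from SimpleGraph.deleteEdges_adj]
    refine ⟨hv₁adj, ?_⟩
    simp only [Set.mem_singleton_iff, Sym2.eq_iff]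
    push_neg
    exact ⟨fun _ h => hv₁mem (Or.inr h), fun h => absurd h hne⟩
  have hadj2 : (SimpleGraph.induce ({w}ᶜ : Set V) (G.deleteEdges {s(x, y)})).Adj
      ⟨v₂.1, hv₂w⟩ ⟨y, hyw⟩ := by
    rw [show ((SimpleGraph.induce ({w}ᶜ : Set V) (G.deleteEdges {s(x, y)})).Adj
        ⟨v₂.1, hv₂w⟩ ⟨y, hyw⟩) ↔ _ from SimpleGraph.deleteEdges_adj]
    refine ⟨hv₂adj.symm, ?_⟩
    simp only [Set.mem_singleton_iff, Sym2.eq_iff]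
    push_neg
    exact ⟨fun h => absurd h (fun h' => hv₂mem (Or.inl h')),
      fun h => absurd h (fun h' => hv₂mem (Or.inr h'))⟩
  exact hadj1.reachable.trans (h12.trans hadj2.reachable)

lemma contract_step {X : Type*} [DecidableEq X] (G : SimpleGraph X) (x y : X)
    (hne : x ≠ y) (a b : X) (hab : G.Adj a b) :
    (G.contractEdge x y).Reachable
      (if h : a = y then ⟨x, hne⟩ else ⟨a, h⟩)
      (if h : b = y then ⟨x, hne⟩ else ⟨b, h⟩) := by
  by_cases ha : a = y <;> by_cases hb : b = y
  · exact absurd (ha.trans hb.symm) hab.ne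
  · simp only [dif_pos ha, dif_neg hb]
    by_cases hbx : b = x
    · rw [show (⟨b, hb⟩ : {v : X // v ≠ y}) = ⟨x, hne⟩ from Subtype.ext hbx]
    · exact SimpleGraph.Adj.reachable
        ⟨fun h => hbx (congrArg Subtype.val h).symm, Or.inr (Or.inl ⟨rfl, ha ▸ hab⟩)⟩
  · simp only [dif_neg ha, dif_pos hb]
    by_cases hax : a = x
    · rw [show (⟨a, ha⟩ : {v : X // v ≠ y}) = ⟨x, hne⟩ from Subtype.ext hax]
    · exact SimpleGraph.Adj.reachable
        ⟨fun h => hax (congrArg Subtype.val h), Or.inr (Or.inr ⟨rfl, hb ▸ hab.symm⟩)⟩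
  · simp only [dif_neg ha, dif_neg hb]
    exact SimpleGraph.Adj.reachable
      ⟨fun h => hab.ne (congrArg Subtype.val h), Or.inl hab⟩

end TwoConnAux

open TwoConnAux in
/-- If a finite simple graph is 2-connected and has more than three vertices,
then for every edge `e`, at least one of the contraction `G/e` or the deletion
`G - e` is 2-connected. -/
theorem contract_or_delete_twoConnected {X : Type*} [Fintype X] [DecidableEq X]
    (G : SimpleGraph X) (h2 : TwoConnected G) (hV : 3 < Fintype.card X)
    (x y : X) (hxy : G.Adj x y) :
    TwoConnected (G.contractEdge x y) ∨
      TwoConnected (G.deleteEdges {s(x, y)}) := by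
  classical
  obtain ⟨hcard, hconn, hdel⟩ := h2
  have hne : x ≠ y := hxy.ne
  by_cases hK : (SimpleGraph.induce ({x, y}ᶜ : Set X) G).Connected
  · -- contraction is 2-connected
    left
    have hcardc : Fintype.card {v : X // v ≠ y} = Fintype.card X - 1 := by
      have h := Fintype.card_subtype_compl (fun v : X => v = y)
      rw [Fintype.card_subtype_eq] at h
      exact h
    refine ⟨by omega, ?_, ?_⟩
    · -- connectivity of the contraction
      refine connected_transfer (fun v : X => if h : v = y then ⟨x, hne⟩ else ⟨v, h⟩)
        (fun a b hab => contract_step G x y hne a b hab) ?_ hconn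
      intro u
      refine ⟨u.1, ?_⟩
      show (if h : u.1 = y then (⟨x, hne⟩ : {v : X // v ≠ y}) else ⟨u.1, h⟩) = u
      rw [dif_neg u.2]
    · -- removing one vertex from the contraction
      intro w
      by_cases hwx : w.1 = x
      · -- the contracted vertex: use connectivity of G - {x, y}
        have hmemv : ∀ v : ↑({x, y}ᶜ : Set X), ¬(v.1 = x ∨ v.1 = y) := fun v => by
          have h2 := v.2
          rwa [Set.mem_compl_iff, Set.mem_insert_iff, Set.mem_singleton_iff] at h2
        refine connected_transfer
          (fun v : ↑({x, y}ᶜ : Set X) =>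
            (⟨⟨v.1, fun h => hmemv v (Or.inr h)⟩, by
              rw [Set.mem_compl_iff, Set.mem_singleton_iff]
              exact fun h => hmemv v (Or.inl ((congrArg Subtype.val h).trans hwx))⟩ :
              ↑({w}ᶜ : Set {v : X // v ≠ y})))
          (fun a b hab => ?_) (fun u => ?_) hK
      -- transferring edges
        · have hG : G.Adj a.1 b.1 := hab
          exact SimpleGraph.Adj.reachable
            ⟨Subtype.coe_ne_coe.mp hG.ne, Or.inl hG⟩
        · have hu1y : u.1.1 ≠ y := u.1.2
          have hu1x : u.1.1 ≠ x := by
            intro h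
            have huw : u.1 = w := Subtype.ext (h.trans hwx.symm)
            have h2 := u.2
            rw [Set.mem_compl_iff, Set.mem_singleton_iff] at h2
            exact h2 huw
          refine ⟨⟨u.1.1, ?_⟩, ?_⟩
          · rw [Set.mem_compl_iff, Set.mem_insert_iff, Set.mem_singleton_iff]
            push_neg
            exact ⟨hu1x, hu1y⟩
          · apply Subtype.ext; apply Subtype.ext; rfl
      · -- another vertex: use connectivity of G - w
        have hxnw : (⟨x, hne⟩ : {v : X // v ≠ y}) ∈ ({w}ᶜ : Set {v : X // v ≠ y}) := by
          rw [Set.mem_compl_iff, Set.mem_singleton_iff]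
          exact fun h => hwx ((congrArg Subtype.val h).symm)
        have hmem2 : ∀ (v : ↑({w.1}ᶜ : Set X)) (h : v.1 ≠ y),
            (⟨v.1, h⟩ : {v : X // v ≠ y}) ∈ ({w}ᶜ : Set {v : X // v ≠ y}) := by
          intro v h
          rw [Set.mem_compl_iff, Set.mem_singleton_iff]
          intro hvw
          have h2 := v.2
          rw [Set.mem_compl_iff, Set.mem_singleton_iff] at h2
          exact h2 (congrArg Subtype.val hvw)
        refine connected_transfer
          (fun v : ↑({w.1}ᶜ : Set X) =>
            if h : v.1 = y then (⟨⟨x, hne⟩, hxnw⟩ : ↑({w}ᶜ : Set {v : X // v ≠ y}))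
            else ⟨⟨v.1, h⟩, hmem2 v h⟩)
          (fun a b hab => ?_) (fun u => ?_) (hdel w.1)
        · have hG : G.Adj a.1 b.1 := hab
          by_cases ha : a.1 = y <;> by_cases hb : b.1 = y
          · exact absurd (ha.trans hb.symm) hG.ne
          · simp only [dif_pos ha, dif_neg hb]
            by_cases hbx : b.1 = x
            · rw [show (⟨⟨b.1, hb⟩, hmem2 b hb⟩ : ↑({w}ᶜ : Set {v : X // v ≠ y}))
                  = ⟨⟨x, hne⟩, hxnw⟩ from Subtype.ext (Subtype.ext hbx)]
            · have hyb : G.Adj y b.1 := by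
                have h' : G.Adj a.1 b.1 := hG
                rwa [ha] at h'
              exact SimpleGraph.Adj.reachable
                ⟨Subtype.coe_ne_coe.mp (show (x : X) ≠ b.1 from fun h => hbx h.symm),
                  Or.inr (Or.inl ⟨rfl, hyb⟩)⟩
          · simp only [dif_neg ha, dif_pos hb]
            by_cases hax : a.1 = x
            · rw [show (⟨⟨a.1, ha⟩, hmem2 a ha⟩ : ↑({w}ᶜ : Set {v : X // v ≠ y}))
                  = ⟨⟨x, hne⟩, hxnw⟩ from Subtype.ext (Subtype.ext hax)]
            · have hya : G.Adj y a.1 := by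
                have h' : G.Adj b.1 a.1 := hG.symm
                rwa [hb] at h'
              exact SimpleGraph.Adj.reachable
                ⟨Subtype.coe_ne_coe.mp (show a.1 ≠ x from hax),
                  Or.inr (Or.inr ⟨rfl, hya⟩)⟩
          · simp only [dif_neg ha, dif_neg hb]
            exact SimpleGraph.Adj.reachable
              ⟨Subtype.coe_ne_coe.mp hG.ne, Or.inl hG⟩

        · by_cases hux : u.1.1 = x
          · have hxmem : x ∈ ({w.1}ᶜ : Set X) := by
              rw [Set.mem_compl_iff, Set.mem_singleton_iff]
              exact fun h => hwx h.symm
            refine ⟨⟨x, hxmem⟩, ?_⟩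
            simp only [dif_neg hne]
            exact Subtype.ext (Subtype.ext hux.symm)
          · have humem : u.1.1 ∈ ({w.1}ᶜ : Set X) := by
              rw [Set.mem_compl_iff, Set.mem_singleton_iff]
              intro h
              have h2 := u.2
              rw [Set.mem_compl_iff, Set.mem_singleton_iff] at h2
              exact h2 (Subtype.ext h)
            refine ⟨⟨u.1.1, humem⟩, ?_⟩
            simp only [dif_neg u.1.2]
  · -- deletion is 2-connected
    right
    obtain ⟨w₀, hw₀x, hw₀y⟩ : ∃ w₀ : X, w₀ ≠ x ∧ w₀ ≠ y := by
      by_contra h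
      push_neg at h
      have hsub : (Finset.univ : Finset X) ⊆ {x, y} := by
        intro v _
        rcases eq_or_ne v x with h1 | h1
        · simp [h1]
        · simp [h v h1]
      have hle : Fintype.card X ≤ ({x, y} : Finset X).card := by
        rw [← Finset.card_univ]
        exact Finset.card_le_card hsub
      have h2le : ({x, y} : Finset X).card ≤ 2 := by
        apply le_trans (Finset.card_insert_le x {y})
        simp
      omega
    have hxw₀ : x ∈ ({w₀}ᶜ : Set X) := by
      rw [Set.mem_compl_iff, Set.mem_singleton_iff]
      exact fun h => hw₀x h.symm
    have hyw₀ : y ∈ ({w₀}ᶜ : Set X) := by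
      rw [Set.mem_compl_iff, Set.mem_singleton_iff]
      exact fun h => hw₀y h.symm
    have hkey₀ := key_reach G hdel x y hne hK w₀ hw₀x hw₀y hxw₀ hyw₀
    have hxyR : (G.deleteEdges {s(x, y)}).Reachable x y := by
      have := reach_transfer (Subtype.val :
          ↑({w₀}ᶜ : Set X) → X)
        (fun a b hab => SimpleGraph.Adj.reachable
          (show (G.deleteEdges {s(x, y)}).Adj a.1 b.1 from hab)) hkey₀
      exact this
    refine ⟨by omega, ?_, ?_⟩
    · -- connectivity of the deletion
      refine connected_transfer id (fun a b hab => ?_) Function.surjective_id hconn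
      by_cases hs : s(a, b) = s(x, y)
      · rcases Sym2.eq_iff.mp hs with ⟨h1, h2⟩ | ⟨h1, h2⟩
        · rw [h1, h2]; exact hxyR
        · rw [h1, h2]; exact hxyR.symm
      · exact SimpleGraph.Adj.reachable
          (SimpleGraph.deleteEdges_adj.mpr
            ⟨hab, fun hm => hs (Set.mem_singleton_iff.mp hm)⟩)
    · -- removing any vertex from the deletion
      intro w
      by_cases hwx : w = x
      · subst hwx
        refine connected_transfer id (fun a b hab => ?_) Function.surjective_id (hdel w)
        have hG : G.Adj a.1 b.1 := hab
        have haw : a.1 ≠ w := by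
          have h2 := a.2
          rwa [Set.mem_compl_iff, Set.mem_singleton_iff] at h2
        have hbw : b.1 ≠ w := by
          have h2 := b.2
          rwa [Set.mem_compl_iff, Set.mem_singleton_iff] at h2
        refine SimpleGraph.Adj.reachable ?_
        show (SimpleGraph.induce ({w}ᶜ : Set X) (G.deleteEdges {s(w, y)})).Adj a b
        rw [show ((SimpleGraph.induce ({w}ᶜ : Set X) (G.deleteEdges {s(w, y)})).Adj a b)
            ↔ _ from SimpleGraph.deleteEdges_adj]
        refine ⟨hG, fun hm => ?_⟩
        rcases Sym2.eq_iff.mp (Set.mem_singleton_iff.mp hm) with ⟨h1, _⟩ | ⟨_, h1⟩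
        · exact haw h1
        · exact hbw h1
      · by_cases hwy : w = y
        · subst hwy
          refine connected_transfer id (fun a b hab => ?_) Function.surjective_id (hdel w)
          have hG : G.Adj a.1 b.1 := hab
          have haw : a.1 ≠ w := by
            have h2 := a.2
            rwa [Set.mem_compl_iff, Set.mem_singleton_iff] at h2
          have hbw : b.1 ≠ w := by
            have h2 := b.2
            rwa [Set.mem_compl_iff, Set.mem_singleton_iff] at h2
          refine SimpleGraph.Adj.reachable ?_
          show (SimpleGraph.induce ({w}ᶜ : Set X) (G.deleteEdges {s(x, w)})).Adj a b
          rw [show ((SimpleGraph.induce ({w}ᶜ : Set X) (G.deleteEdges {s(x, w)})).Adj a b)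
              ↔ _ from SimpleGraph.deleteEdges_adj]
          refine ⟨hG, fun hm => ?_⟩
          rcases Sym2.eq_iff.mp (Set.mem_singleton_iff.mp hm) with ⟨_, h1⟩ | ⟨h1, _⟩
          · exact hbw h1
          · exact haw h1
        · have hxw : x ∈ ({w}ᶜ : Set X) := by
            rw [Set.mem_compl_iff, Set.mem_singleton_iff]
            exact fun h => hwx h.symm
          have hyw : y ∈ ({w}ᶜ : Set X) := by
            rw [Set.mem_compl_iff, Set.mem_singleton_iff]
            exact fun h => hwy h.symm
          have hkey := key_reach G hdel x y hne hK w hwx hwy hxw hyw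
          refine connected_transfer id (fun a b hab => ?_) Function.surjective_id (hdel w)
          have hG : G.Adj a.1 b.1 := hab
          by_cases hs : s(a.1, b.1) = s(x, y)
          · rcases Sym2.eq_iff.mp hs with ⟨h1, h2⟩ | ⟨h1, h2⟩
            · rw [show (id a : ↑({w}ᶜ : Set X)) = ⟨x, hxw⟩ from Subtype.ext h1,
                show (id b : ↑({w}ᶜ : Set X)) = ⟨y, hyw⟩ from Subtype.ext h2]
              exact hkey
            · rw [show (id a : ↑({w}ᶜ : Set X)) = ⟨y, hyw⟩ from Subtype.ext h1,
                show (id b : ↑({w}ᶜ : Set X)) = ⟨x, hxw⟩ from Subtype.ext h2]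
              exact hkey.symm
          · refine SimpleGraph.Adj.reachable ?_
            show (SimpleGraph.induce ({w}ᶜ : Set X) (G.deleteEdges {s(x, y)})).Adj a b
            rw [show ((SimpleGraph.induce ({w}ᶜ : Set X) (G.deleteEdges {s(x, y)})).Adj a b)
                ↔ _ from SimpleGraph.deleteEdges_adj]
            exact ⟨hG, fun hm => hs (Set.mem_singleton_iff.mp hm)⟩
end

section
/- Let G = (X, E) be a finite simple graph that is 2-connected and has more than three vertices. Then there exists an edge e of G such that the contracted graph G/e is 2-connected. -/
section Infra
open SimpleGraph
variable {X : Type*}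

/-- Reachability within a set `S` via a walk all of whose vertices lie in `S`. -/
def GWalkIn (G : SimpleGraph X) (S : Set X) (a b : X) : Prop :=
  ∃ p : G.Walk a b, ∀ v ∈ p.support, v ∈ S

namespace GWalkIn

variable {G : SimpleGraph X} {S T : Set X} {a b c : X}

lemma mem_left (h : GWalkIn G S a b) : a ∈ S := by
  obtain ⟨p, hp⟩ := h; exact hp a p.start_mem_support

lemma mem_right (h : GWalkIn G S a b) : b ∈ S := by
  obtain ⟨p, hp⟩ := h; exact hp b p.end_mem_support

lemma refl (ha : a ∈ S) : GWalkIn G S a a :=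
  ⟨SimpleGraph.Walk.nil, by simp [ha]⟩

lemma symm (h : GWalkIn G S a b) : GWalkIn G S b a := by
  obtain ⟨p, hp⟩ := h
  exact ⟨p.reverse, fun v hv => hp v (by simpa [SimpleGraph.Walk.support_reverse] using hv)⟩

lemma trans (h : GWalkIn G S a b) (h' : GWalkIn G S b c) : GWalkIn G S a c := by
  obtain ⟨p, hp⟩ := h
  obtain ⟨q, hq⟩ := h'
  refine ⟨p.append q, fun v hv => ?_⟩
  rcases (SimpleGraph.Walk.mem_support_append_iff _ _).1 hv with hv | hv
  · exact hp v hv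
  · exact hq v hv

lemma adj_right (h : GWalkIn G S a b) (hadj : G.Adj b c) (hc : c ∈ S) : GWalkIn G S a c :=
  h.trans ⟨hadj.toWalk, by
    have hb : b ∈ S := h.mem_right
    intro v hv
    simp only [SimpleGraph.Walk.support_cons, SimpleGraph.Walk.support_nil,
      List.mem_cons, List.mem_singleton] at hv
    rcases hv with rfl | rfl | h'
    · exact hb
    · exact hc
    · simp at h'⟩

lemma of_mem_support [DecidableEq X] {p : G.Walk a b} (hp : ∀ v ∈ p.support, v ∈ S)
    {v : X} (hv : v ∈ p.support) : GWalkIn G S a v :=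
  ⟨p.takeUntil v hv, fun u hu => hp u (SimpleGraph.Walk.support_takeUntil_subset _ _ hu)⟩

end GWalkIn

lemma walk_closure {G : SimpleGraph X} {S T : Set X} {a b : X} (p : G.Walk a b)
    (hsupp : ∀ v ∈ p.support, v ∈ T) (hS : a ∈ S)
    (habs : ∀ v w, v ∈ S → w ∈ T → G.Adj v w → w ∈ S) : b ∈ S := by
  induction p with
  | nil => exact hS
  | cons h q ih =>
    refine ih (fun v hv => hsupp v (by simp [SimpleGraph.Walk.support_cons, hv]))
      (habs _ _ hS (hsupp _ (by simp [SimpleGraph.Walk.support_cons])) h)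

lemma reachable_induce_of_walkIn {G : SimpleGraph X} {S : Set X} {a b : X}
    (ha : a ∈ S) (hb : b ∈ S) (h : GWalkIn G S a b) :
    (G.induce S).Reachable ⟨a, ha⟩ ⟨b, hb⟩ := by
  obtain ⟨p, hp⟩ := h
  induction p with
  | nil => rfl
  | @cons u v w h q ih =>
    have hv : v ∈ S := hp v (by simp [SimpleGraph.Walk.support_cons])
    have h1 : (G.induce S).Adj ⟨u, ha⟩ ⟨v, hv⟩ := by simpa using h
    refine h1.reachable.trans ?_
    exact ih hv hb (fun x hx => hp x (by simp [SimpleGraph.Walk.support_cons, hx]))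

lemma walkIn_of_reachable_induce {G : SimpleGraph X} {S : Set X} {a b : X}
    (ha : a ∈ S) (hb : b ∈ S) (h : (G.induce S).Reachable ⟨a, ha⟩ ⟨b, hb⟩) :
    GWalkIn G S a b := by
  obtain ⟨p⟩ := h
  refine ⟨p.map (SimpleGraph.Embedding.induce S).toHom, ?_⟩
  intro v hv
  replace hv : v ∈ (p.map (SimpleGraph.Embedding.induce S).toHom).support := hv
  rw [SimpleGraph.Walk.support_map] at hv
  obtain ⟨u, hu, rfl⟩ := List.mem_map.1 hv
  exact u.2

lemma connected_of_map {V W : Type*} (H : SimpleGraph V) (G' : SimpleGraph W) (f : V → W)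
    (hsurj : Function.Surjective f)
    (hadj : ∀ a b, H.Adj a b → f a = f b ∨ G'.Adj (f a) (f b))
    (hH : H.Connected) : G'.Connected := by
  have key : ∀ {a b : V} (_ : H.Walk a b), G'.Reachable (f a) (f b) := by
    intro a b p
    induction p with
    | nil => exact SimpleGraph.Reachable.refl _
    | cons h q ih =>
      rcases hadj _ _ h with he | ha
      · rw [he]; exact ih
      · exact ha.reachable.trans ih
  have : Nonempty W := Nonempty.map f hH.nonempty
  refine ⟨fun w1 w2 => ?_⟩
  obtain ⟨a, rfl⟩ := hsurj w1
  obtain ⟨b, rfl⟩ := hsurj w2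
  obtain ⟨p⟩ := hH.preconnected a b
  exact key p

lemma exists_adj_reach {G : SimpleGraph X} {x y v : X}
    (hy : (SimpleGraph.induce ({y}ᶜ : Set X) G).Connected)
    (hxy : x ≠ y) (hvx : v ≠ x) (hvy : v ≠ y) :
    ∃ w, GWalkIn G ({x, y}ᶜ : Set X) v w ∧ G.Adj x w := by
  by_contra hno
  push_neg at hno
  have hvmem : v ∈ ({y}ᶜ : Set X) := by simp [hvy]
  have hxmem : x ∈ ({y}ᶜ : Set X) := by simp [hxy]
  have hreach := hy.preconnected ⟨v, hvmem⟩ ⟨x, hxmem⟩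
  obtain ⟨p, hp⟩ := walkIn_of_reachable_induce hvmem hxmem hreach
  have hxS : x ∈ {u | GWalkIn G ({x, y}ᶜ : Set X) v u} := by
    refine walk_closure p hp ?_ ?_
    · exact GWalkIn.refl (by simp [hvx, hvy])
    · intro u w hu hw' hadj
      by_cases hwx : w = x
      · exact absurd (hwx ▸ hadj).symm (hno u hu)
      · have hwy : w ≠ y := by simpa using hw'
        exact GWalkIn.adj_right hu hadj (by simp [hwx, hwy])
  have hmem := GWalkIn.mem_right hxS
  simp at hmem

lemma exists_good_pair [Fintype X] [DecidableEq X] (G : SimpleGraph X)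
    (h2 : TwoConnected G) :
    ∃ x y, G.Adj x y ∧ ∀ a b, a ≠ x → a ≠ y → b ≠ x → b ≠ y →
      GWalkIn G ({x, y}ᶜ : Set X) a b := by
  classical
  by_contra hcon
  push_neg at hcon
  -- turn hcon into a usable form
  have Hcon := hcon
  set Good : X × X × X → Prop := fun t => G.Adj t.1 t.2.1 ∧ t.2.2 ≠ t.1 ∧ t.2.2 ≠ t.2.1 ∧
      ∃ b, b ≠ t.1 ∧ b ≠ t.2.1 ∧ ¬ GWalkIn G ({t.1, t.2.1}ᶜ : Set X) t.2.2 b with hGoodDef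
  set m : X × X × X → ℕ := fun t => {v | GWalkIn G ({t.1, t.2.1}ᶜ : Set X) t.2.2 v}.ncard
    with hmDef
  -- the set of good triples is nonempty
  obtain ⟨v0, w0, hvw⟩ := Fintype.exists_pair_of_one_lt_card (α := X) (by have := h2.1; omega)
  obtain ⟨p0⟩ := h2.2.1.preconnected v0 w0
  have hedge : ∃ x y, G.Adj x y := by
    cases p0 with
    | nil => exact absurd rfl hvw
    | cons h q => exact ⟨_, _, h⟩
  obtain ⟨x0, y0, hx0y0⟩ := hedge
  obtain ⟨a0, b0, ha0x, ha0y, hb0x, hb0y, hn0⟩ := Hcon x0 y0 hx0y0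
  have hne : (Finset.univ.filter Good).Nonempty :=
    ⟨(x0, y0, a0), Finset.mem_filter.2 ⟨Finset.mem_univ _,
      ⟨hx0y0, ha0x, ha0y, b0, hb0x, hb0y, hn0⟩⟩⟩
  obtain ⟨t, htF, hmin⟩ := Finset.exists_min_image (Finset.univ.filter Good) m hne
  obtain ⟨x, y, a⟩ := t
  obtain ⟨hxy, hax, hay, b, hbx, hby, hnab⟩ := (Finset.mem_filter.1 htF).2
  dsimp only at hxy hax hay hbx hby hnab
  -- find z in the component of a adjacent to y
  have hswap : ({y, x}ᶜ : Set X) = ({x, y}ᶜ : Set X) := by rw [Set.pair_comm]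
  obtain ⟨z, hz, hyz⟩ := exists_adj_reach (x := y) (y := x) (v := a) (h2.2.2 x) hxy.ne' hay hax
  rw [hswap] at hz
  have hzmem := hz.mem_right
  have hzxy : z ≠ x ∧ z ≠ y := by simpa using hzmem
  obtain ⟨hzx, hzy⟩ := hzxy
  have hxz : x ≠ z := hzx.symm
  have hyzne : y ≠ z := hzy.symm
  -- key claim
  have K : ∀ v, v ≠ y → v ≠ z → ¬ GWalkIn G ({x, y}ᶜ : Set X) a v →
      GWalkIn G ({y, z}ᶜ : Set X) x v := by
    intro v hvy hvz hvC
    by_cases hvx : v = x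
    · subst hvx
      exact GWalkIn.refl (by simp [hxy.ne, hxz])
    · obtain ⟨w, hvw', hxw⟩ := exists_adj_reach (h2.2.2 y) hxy.ne hvx hvy
      obtain ⟨p, hp⟩ := hvw'
      have hsupp : ∀ u ∈ p.support, u ∈ ({y, z}ᶜ : Set X) := by
        intro u hu
        have hu1 := hp u hu
        have huy : u ≠ y := by simp at hu1; exact hu1.2
        have huz : u ≠ z := by
          intro hEq
          subst hEq
          have h1 : GWalkIn G ({x, y}ᶜ : Set X) v u := GWalkIn.of_mem_support hp hu
          exact hvC (hz.trans h1.symm)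
        simp [huy, huz]
      have h1 : GWalkIn G ({y, z}ᶜ : Set X) v w := ⟨p, hsupp⟩
      have hx_mem : x ∈ ({y, z}ᶜ : Set X) := by simp [hxy.ne, hxz]
      exact (h1.adj_right hxw.symm hx_mem).symm
  -- disconnection at the edge y z
  obtain ⟨a0', b0', ha0'y, ha0'z, hb0'y, hb0'z, hn0'⟩ := Hcon y z hyz
  have hone : ¬ GWalkIn G ({y, z}ᶜ : Set X) x a0' ∨ ¬ GWalkIn G ({y, z}ᶜ : Set X) x b0' := by
    by_contra hc
    push_neg at hc
    exact hn0' (hc.1.symm.trans hc.2)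
  obtain ⟨a', ha'y, ha'z, hnxa'⟩ : ∃ a', a' ≠ y ∧ a' ≠ z ∧
      ¬ GWalkIn G ({y, z}ᶜ : Set X) x a' := by
    rcases hone with h | h
    exacts [⟨a0', ha0'y, ha0'z, h⟩, ⟨b0', hb0'y, hb0'z, h⟩]
  have hsub : {v | GWalkIn G ({y, z}ᶜ : Set X) a' v} ⊆
      {v | GWalkIn G ({x, y}ᶜ : Set X) a v} \ {z} := by
    intro v hv
    have hvmem := GWalkIn.mem_right hv
    have hvy : v ≠ y := by simp at hvmem; exact hvmem.1
    have hvz : v ≠ z := by simp at hvmem; exact hvmem.2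
    constructor
    · by_contra hnot
      exact hnxa' ((K v hvy hvz hnot).trans (GWalkIn.symm hv))
    · simp [hvz]
  have hGood' : Good (y, z, a') :=
    ⟨hyz, ha'y, ha'z, x, hxy.ne, hxz, fun hh => hnxa' hh.symm⟩
  have hlt : m (y, z, a') < m (x, y, a) := by
    calc m (y, z, a') ≤ ({v | GWalkIn G ({x, y}ᶜ : Set X) a v} \ {z}).ncard :=
          Set.ncard_le_ncard hsub (Set.toFinite _)
      _ < {v | GWalkIn G ({x, y}ᶜ : Set X) a v}.ncard :=
          Set.ncard_diff_singleton_lt_of_mem hz (Set.toFinite _)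
      _ = m (x, y, a) := rfl
  have := hmin (y, z, a') (Finset.mem_filter.2 ⟨Finset.mem_univ _, hGood'⟩)
  omega

end Infra

lemma twoConnected_contract_of_pair {X : Type*} [Fintype X] [DecidableEq X]
    (G : SimpleGraph X) (h2 : TwoConnected G) (hV : 3 < Fintype.card X) {x y : X}
    (hxy : G.Adj x y)
    (hP : ∀ a b, a ≠ x → a ≠ y → b ≠ x → b ≠ y → GWalkIn G ({x, y}ᶜ : Set X) a b) :
    TwoConnected (G.contractEdge x y) := by
  have hne : x ≠ y := hxy.ne
  refine ⟨?_, ?_, ?_⟩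
  · -- cardinality
    have h1 : Fintype.card {v : X // v ≠ y} = Fintype.card X - 1 := by
      have := Fintype.card_subtype_compl (fun v : X => v = y)
      simpa [Fintype.card_subtype_eq] using this
    omega
  · -- connectivity of the contracted graph
    refine connected_of_map G (G.contractEdge x y)
      (fun v => if h : v = y then ⟨x, hne⟩ else ⟨v, h⟩) ?_ ?_ h2.2.1
    · intro w
      refine ⟨w.1, ?_⟩
      dsimp only
      rw [dif_neg w.2]
    · intro a b hab
      by_cases ha : a = y <;> by_cases hb : b = y
      · exact absurd (ha ▸ hb ▸ hab) (G.irrefl)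
      · rw [dif_pos ha, dif_neg hb]
        by_cases hbx : b = x
        · exact Or.inl (Subtype.ext hbx.symm)
        · refine Or.inr ⟨fun h => hbx (congrArg Subtype.val h).symm,
            Or.inr (Or.inl ⟨rfl, ha ▸ hab⟩)⟩
      · rw [dif_pos hb, dif_neg ha]
        by_cases hax : a = x
        · exact Or.inl (Subtype.ext hax)
        · refine Or.inr ⟨fun h => hax (congrArg Subtype.val h),
            Or.inr (Or.inr ⟨rfl, hb ▸ hab.symm⟩)⟩
      · rw [dif_neg ha, dif_neg hb]
        exact Or.inr ⟨fun h => hab.ne (congrArg Subtype.val h), Or.inl hab⟩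
  · -- removing any vertex keeps it connected
    intro w
    by_cases hwx : w.1 = x
    · -- removing the merged vertex
      have hex : ∃ v : X, v ≠ x ∧ v ≠ y := by
        by_contra hc
        push_neg at hc
        have hsub : (Finset.univ : Finset X) ⊆ {x, y} := by
          intro v _
          by_cases hv : v = x
          · simp [hv]
          · simp [hc v hv]
        have hcard := Finset.card_le_card hsub
        have h2' : ({x, y} : Finset X).card ≤ 2 :=
          (Finset.card_insert_le _ _).trans (by simp)
        simp [Finset.card_univ] at hcard
        omega
      obtain ⟨v1, hv1x, hv1y⟩ := hex
      have hne1 : Nonempty ↥({x, y}ᶜ : Set X) := ⟨⟨v1, by simp [hv1x, hv1y]⟩⟩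
      have hconn : (G.induce ({x, y}ᶜ : Set X)).Connected := by
        refine ⟨fun p q => ?_⟩
        obtain ⟨pa, hpa⟩ := p
        obtain ⟨pb, hpb⟩ := q
        have hpa' : pa ≠ x ∧ pa ≠ y := by simpa using hpa
        have hpb' : pb ≠ x ∧ pb ≠ y := by simpa using hpb
        exact reachable_induce_of_walkIn hpa hpb
          (hP pa pb hpa'.1 hpa'.2 hpb'.1 hpb'.2)
      have hmem : ∀ v : ↥({x, y}ᶜ : Set X), v.1 ≠ x ∧ v.1 ≠ y := by
        intro v
        obtain ⟨v, hv⟩ := v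
        simp only [Set.mem_compl_iff, Set.mem_insert_iff, Set.mem_singleton_iff] at hv
        push_neg at hv
        exact hv
      refine connected_of_map (G.induce ({x, y}ᶜ : Set X)) _
        (fun v => ⟨⟨v.1, (hmem v).2⟩,
          fun h => (hmem v).1 ((congrArg Subtype.val h).trans hwx)⟩) ?_ ?_ hconn
      · rintro ⟨⟨t, hty⟩, htw⟩
        have htx : t ≠ x := by
          intro h
          exact htw (Subtype.ext (h.trans hwx.symm))
        refine ⟨⟨t, by simp [htx, hty]⟩, rfl⟩
      · rintro ⟨a, ha⟩ ⟨b, hb⟩ hab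
        have hab' : G.Adj a b := by simpa using hab
        refine Or.inr ⟨?_, Or.inl hab'⟩
        intro h
        simp only [Function.Embedding.coe_subtype, Subtype.mk.injEq] at h
        exact hab'.ne h
    · -- removing an ordinary vertex u
      have hwy : w.1 ≠ y := w.2
      have hxw : x ≠ w.1 := fun h => hwx h.symm
      refine connected_of_map (G.induce ({w.1}ᶜ : Set X)) _
        (fun v => if h : v.1 = y
          then ⟨⟨x, hne⟩, fun hh => hwx (congrArg Subtype.val hh).symm⟩
          else ⟨⟨v.1, h⟩, fun hh => (v.2 : v.1 ≠ w.1) (congrArg Subtype.val hh)⟩)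
        ?_ ?_ (h2.2.2 w.1)
      · rintro ⟨⟨t, hty⟩, htw⟩
        have htu : t ≠ w.1 := fun h => htw (Subtype.ext h)
        refine ⟨⟨t, htu⟩, ?_⟩
        dsimp only
        rw [dif_neg hty]
      · rintro ⟨a, ha⟩ ⟨b, hb⟩ hab
        have hab' : G.Adj a b := by simpa using hab
        dsimp only
        by_cases hay : a = y <;> by_cases hby : b = y
        · exact absurd (hay ▸ hby ▸ hab') G.irrefl
        · rw [dif_pos hay, dif_neg hby]
          by_cases hbx : b = x
          · exact Or.inl (Subtype.ext (Subtype.ext hbx.symm))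
          · refine Or.inr ⟨?_, Or.inr (Or.inl ⟨rfl, hay ▸ hab'⟩)⟩
            intro h
            simp only [Function.Embedding.coe_subtype, Subtype.mk.injEq] at h
            exact hbx h.symm
        · rw [dif_pos hby, dif_neg hay]
          by_cases hax : a = x
          · exact Or.inl (Subtype.ext (Subtype.ext hax))
          · refine Or.inr ⟨?_, Or.inr (Or.inr ⟨rfl, hby ▸ hab'.symm⟩)⟩
            intro h
            simp only [Function.Embedding.coe_subtype, Subtype.mk.injEq] at h
            exact hax h
        · rw [dif_neg hay, dif_neg hby]
          refine Or.inr ⟨?_, Or.inl hab'⟩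
          intro h
          simp only [Function.Embedding.coe_subtype, Subtype.mk.injEq] at h
          exact hab'.ne h

/-- If a finite simple graph is 2-connected and has more than three vertices,
then there exists an edge whose contraction is 2-connected. -/
theorem exists_edge_contract_twoConnected {X : Type*} [Fintype X] [DecidableEq X]
    (G : SimpleGraph X) (h2 : TwoConnected G) (hV : 3 < Fintype.card X) :
    ∃ x y : X, G.Adj x y ∧ TwoConnected (G.contractEdge x y) := by
  obtain ⟨x, y, hxy, hP⟩ := exists_good_pair G h2
  exact ⟨x, y, hxy, twoConnected_contract_of_pair G h2 hV hxy hP⟩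
end
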